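/- arXiv:1308.1064 — 2 statements merged into one kernel-verified Lean document; each statement's English description precedes it below -/
import Mathlib

section
/- Let f, a : [0,1] → ℝ be C² on (0,1], continuous on [0,1], with f(1) = t > 0, a(0) = a(1) = 0, and suppose both satisfy the same linear ODE: −f'' − f'/r + f/r² = W(r) f and −a'' − a'/r + a/r² = W(r) a on (0,1], where W is continuous, with ∫₀¹(|f'|² + f²/r²) r dr < ∞ and ∫₀¹(|a'|² + a²/r²) r dr < ∞. Then a'(1) = 0, and consequently a ≡ 0. -/
open MeasureTheory

lemma energy_bound (u v w r x M' : ℝ) (hx : 0 < x) (hxr : x ≤ r) (hw : |w| ≤ M') :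
    0 ≤ 2*u*v + 2*v*(-v/r + u/r^2 - w*u) + (2 + 2/x^2 + 2*M' + 2/x)*(u^2+v^2) := by
  have hr : 0 < r := lt_of_lt_of_le hx hxr
  have hB : (0:ℝ) < r^2 * x^2 := by positivity
  have habs : |2*u*v| ≤ u^2 + v^2 :=
    abs_le.mpr ⟨by nlinarith [sq_nonneg (u+v)], by nlinarith [sq_nonneg (u-v)]⟩
  have hE : -(M'*(u^2+v^2)) ≤ -(w*(2*u*v)) := by
    have h1 : |w*(2*u*v)| ≤ M' * (u^2+v^2) := by
      rw [abs_mul]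
      exact mul_le_mul hw habs (abs_nonneg _) ((abs_nonneg w).trans hw)
    linarith [(abs_le.mp h1).2]
  have hE' : (-(M'*(u^2+v^2))) * (r^2*x^2) ≤ (-(w*(2*u*v))) * (r^2*x^2) :=
    mul_le_mul_of_nonneg_right hE hB.le
  have key : 0 ≤ (2*u*v + 2*v*(-v/r + u/r^2 - w*u) + (2 + 2/x^2 + 2*M' + 2/x)*(u^2+v^2)) * (r^2*x^2) := by
    have expand : (2*u*v + 2*v*(-v/r + u/r^2 - w*u) + (2 + 2/x^2 + 2*M' + 2/x)*(u^2+v^2)) * (r^2*x^2)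
        = 2*u*v*(r^2*x^2) - 2*v^2*r*x^2 + 2*u*v*x^2 - (w*(2*u*v))*(r^2*x^2)
          + 2*(u^2+v^2)*(r^2*x^2) + 2*(u^2+v^2)*r^2 + 2*M'*(u^2+v^2)*(r^2*x^2) + 2*(u^2+v^2)*(r^2*x) := by
      field_simp
      ring
    rw [expand]
    nlinarith [mul_nonneg (mul_nonneg (sq_nonneg (u+v)) (sq_nonneg r)) (sq_nonneg x),
      mul_nonneg (mul_nonneg (mul_nonneg (sub_nonneg.mpr hxr) hx.le) hr.le) (sq_nonneg v),
      mul_nonneg (sq_nonneg u) (mul_nonneg (sq_nonneg r) hx.le),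
      mul_nonneg (sq_nonneg (u+v)) (sq_nonneg x),
      mul_nonneg (add_nonneg (sq_nonneg u) (sq_nonneg v)) (sub_nonneg.mpr (by nlinarith : x^2 ≤ r^2)),
      hE', mul_nonneg (mul_nonneg ((abs_nonneg w).trans hw) (add_nonneg (sq_nonneg u) (sq_nonneg v))) hB.le]
  refine le_of_mul_le_mul_right ?_ hB
  rw [zero_mul]; exact key

/-- A function with vanishing derivative on an open interval is constant there. -/
lemma const_on_Ioo {g : ℝ → ℝ} {lo hi : ℝ}
    (h : ∀ x ∈ Set.Ioo lo hi, HasDerivAt g 0 x) :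
    ∀ x ∈ Set.Ioo lo hi, ∀ y ∈ Set.Ioo lo hi, g x = g y := by
  suffices H : ∀ x ∈ Set.Ioo lo hi, ∀ y ∈ Set.Ioo lo hi, x ≤ y → g y = g x by
    intro x hx y hy
    rcases le_total x y with hxy | hxy
    · exact (H x hx y hy hxy).symm
    · exact H y hy x hx hxy
  intro x hx y hy hxy
  have hsub : Set.Icc x y ⊆ Set.Ioo lo hi := fun z hz =>
    ⟨lt_of_lt_of_le hx.1 hz.1, lt_of_le_of_lt hz.2 hy.2⟩
  have hc : ContinuousOn g (Set.Icc x y) := fun z hz =>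
    ((h z (hsub hz)).differentiableAt.continuousAt).continuousWithinAt
  exact constant_of_has_deriv_right_zero hc
    (fun z hz => (h z (hsub ⟨hz.1, hz.2.le⟩)).hasDerivWithinAt) y (Set.right_mem_Icc.mpr hxy)

theorem integration_by_parts_forces_zero (f a W : ℝ → ℝ) (t : ℝ) (ht : 0 < t)
    (hf2 : ContDiffOn ℝ 2 f (Set.Ioc 0 1)) (ha2 : ContDiffOn ℝ 2 a (Set.Ioc 0 1))
    (hfc : ContinuousOn f (Set.Icc 0 1)) (hac : ContinuousOn a (Set.Icc 0 1))
    (hW : ContinuousOn W (Set.Ioc 0 1))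
    (hf1 : f 1 = t) (ha0 : a 0 = 0) (ha1 : a 1 = 0)
    (hfeq : ∀ r ∈ Set.Ioc (0:ℝ) 1,
      -(deriv (deriv f) r) - deriv f r / r + f r / r ^ 2 = W r * f r)
    (haeq : ∀ r ∈ Set.Ioc (0:ℝ) 1,
      -(deriv (deriv a) r) - deriv a r / r + a r / r ^ 2 = W r * a r)
    (hfint : IntegrableOn (fun r => ((deriv f r) ^ 2 + (f r) ^ 2 / r ^ 2) * r)
      (Set.Ioc 0 1))
    (haint : IntegrableOn (fun r => ((deriv a r) ^ 2 + (a r) ^ 2 / r ^ 2) * r)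
      (Set.Ioc 0 1)) :
    deriv a 1 = 0 ∧ ∀ r ∈ Set.Ioc (0:ℝ) 1, a r = 0 := by
  have hIooIoc : Set.Ioo (0:ℝ) 1 ⊆ Set.Ioc 0 1 := Set.Ioo_subset_Ioc_self
  have hIooIcc : Set.Ioo (0:ℝ) 1 ⊆ Set.Icc 0 1 := Set.Ioo_subset_Icc_self
  have hopen : IsOpen (Set.Ioo (0:ℝ) 1) := isOpen_Ioo
  have hfo : ContDiffOn ℝ 2 f (Set.Ioo 0 1) := hf2.mono hIooIoc
  have hao : ContDiffOn ℝ 2 a (Set.Ioo 0 1) := ha2.mono hIooIoc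
  -- first derivatives as honest derivatives
  have hdf : ∀ x ∈ Set.Ioo (0:ℝ) 1, HasDerivAt f (deriv f x) x := by
    intro x hx
    exact (hfo.differentiableOn (by norm_num)).differentiableAt
      (hopen.mem_nhds hx) |>.hasDerivAt
  have hda : ∀ x ∈ Set.Ioo (0:ℝ) 1, HasDerivAt a (deriv a x) x := by
    intro x hx
    exact (hao.differentiableOn (by norm_num)).differentiableAt
      (hopen.mem_nhds hx) |>.hasDerivAt
  -- second derivatives
  have hdf' : ∀ x ∈ Set.Ioo (0:ℝ) 1, HasDerivAt (deriv f) (deriv (deriv f) x) x := by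
    intro x hx
    have h1 : ContDiffOn ℝ 1 (deriv f) (Set.Ioo 0 1) :=
      hfo.deriv_of_isOpen hopen (by norm_num)
    exact (h1.differentiableOn (by norm_num)).differentiableAt (hopen.mem_nhds hx) |>.hasDerivAt
  have hda' : ∀ x ∈ Set.Ioo (0:ℝ) 1, HasDerivAt (deriv a) (deriv (deriv a) x) x := by
    intro x hx
    have h1 : ContDiffOn ℝ 1 (deriv a) (Set.Ioo 0 1) :=
      hao.deriv_of_isOpen hopen (by norm_num)
    exact (h1.differentiableOn (by norm_num)).differentiableAt (hopen.mem_nhds hx) |>.hasDerivAt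
  -- continuity of deriv a on Ioo
  have hcda : ContinuousOn (deriv a) (Set.Ioo 0 1) :=
    hao.continuousOn_deriv_of_isOpen hopen (by norm_num)
  -- ODEs rearranged
  have hf'' : ∀ x ∈ Set.Ioo (0:ℝ) 1,
      deriv (deriv f) x = -(deriv f x / x) + f x/x^2 - W x * f x := by
    intro x hx; have := hfeq x (hIooIoc hx); linarith
  have ha'' : ∀ x ∈ Set.Ioo (0:ℝ) 1,
      deriv (deriv a) x = -(deriv a x / x) + a x/x^2 - W x * a x := by
    intro x hx; have := haeq x (hIooIoc hx); linarith
  -- the Wronskian-type quantity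
  set g : ℝ → ℝ := fun r => r * (deriv a r * f r - deriv f r * a r) with hgdef
  have hgderiv : ∀ x ∈ Set.Ioo (0:ℝ) 1, HasDerivAt g 0 x := by
    intro x hx
    have hx0 : x ≠ 0 := ne_of_gt hx.1
    have H : HasDerivAt g
        (1 * (deriv a x * f x - deriv f x * a x) +
          x * ((deriv (deriv a) x * f x + deriv a x * deriv f x) -
               (deriv (deriv f) x * a x + deriv f x * deriv a x))) x :=
      (hasDerivAt_id x).mul (((hda' x hx).mul (hdf x hx)).sub ((hdf' x hx).mul (hda x hx)))
    convert H using 1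
    rw [ha'' x hx, hf'' x hx]
    field_simp
    ring
  have hgconst := const_on_Ioo hgderiv
  have h12 : (1/2 : ℝ) ∈ Set.Ioo (0:ℝ) 1 := by norm_num
  -- the constant is zero
  have hc0 : g (1/2) = 0 := by
    by_contra hc
    set c := g (1/2) with hcdef
    -- pointwise bound |c| * r⁻¹ ≤ energy integrand
    have key : ∀ r ∈ Set.Ioo (0:ℝ) 1, |c| * r⁻¹ ≤
        (((deriv f r)^2 + (f r)^2/r^2)*r + ((deriv a r)^2 + (a r)^2/r^2)*r)/2 := by
      intro r hr
      have hr0 : 0 < r := hr.1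
      have hgr : g r = c := hgconst r hr _ h12
      have h1 : |c| ≤ r * (|deriv a r| * |f r| + |deriv f r| * |a r|) := by
        rw [← hgr, hgdef]
        simp only []
        rw [abs_mul, abs_of_pos hr0]
        gcongr
        calc |deriv a r * f r - deriv f r * a r|
            ≤ |deriv a r * f r| + |deriv f r * a r| := abs_sub _ _
          _ = |deriv a r| * |f r| + |deriv f r| * |a r| := by rw [abs_mul, abs_mul]
      have hRHS : (((deriv f r)^2 + (f r)^2/r^2)*r + ((deriv a r)^2 + (a r)^2/r^2)*r)/2 * r
          = ((deriv f r)^2*r^2 + (f r)^2 + (deriv a r)^2*r^2 + (a r)^2)/2 := by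
        field_simp; ring
      rw [mul_inv_le_iff₀ hr0, hRHS]
      nlinarith [sq_nonneg (|deriv a r| * r - |f r|), sq_nonneg (|deriv f r| * r - |a r|),
        sq_abs (deriv a r), sq_abs (deriv f r), sq_abs (a r), sq_abs (f r),
        abs_nonneg (deriv a r), abs_nonneg (f r), abs_nonneg (deriv f r), abs_nonneg (a r), h1]
    have hIoo_f : IntegrableOn (fun r => ((deriv f r)^2 + (f r)^2/r^2)*r) (Set.Ioo 0 1) :=
      hfint.mono_set hIooIoc
    have hIoo_a : IntegrableOn (fun r => ((deriv a r)^2 + (a r)^2/r^2)*r) (Set.Ioo 0 1) :=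
      haint.mono_set hIooIoc
    have hint : IntegrableOn (fun r => |c| * r⁻¹) (Set.Ioo 0 1) := by
      have hmeas : AEStronglyMeasurable (fun r : ℝ => |c| * r⁻¹)
          (volume.restrict (Set.Ioo 0 1)) :=
        (measurable_const.mul measurable_inv).aestronglyMeasurable
      refine Integrable.mono' ((hIoo_f.add hIoo_a).div_const 2) hmeas ?_
      filter_upwards [ae_restrict_mem measurableSet_Ioo] with r hr
      rw [Real.norm_eq_abs,
        abs_of_nonneg (mul_nonneg (abs_nonneg c) (inv_nonneg.mpr hr.1.le))]
      exact key r hr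
    have h1 : IntegrableOn (fun r : ℝ => r⁻¹) (Set.Ioo (0:ℝ) 1) := by
      have h2 := hint.const_mul |c|⁻¹
      have h3 : (fun r : ℝ => |c|⁻¹ * (|c| * r⁻¹)) = fun r : ℝ => r⁻¹ := by
        funext r
        have : |c| ≠ 0 := abs_ne_zero.mpr hc
        field_simp
      rwa [h3] at h2
    have h2 : IntervalIntegrable (fun r : ℝ => r⁻¹) volume 0 1 := by
      rwa [intervalIntegrable_iff_integrableOn_Ioo_of_le (by norm_num)]
    rw [intervalIntegrable_inv_iff] at h2
    rcases h2 with h2 | h2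
    · norm_num at h2
    · exact h2 (by simp [Set.mem_uIcc])
  -- g vanishes identically on Ioo 0 1
  have hg0 : ∀ x ∈ Set.Ioo (0:ℝ) 1, g x = 0 := fun x hx => (hgconst x hx _ h12).trans hc0
  have hw0 : ∀ x ∈ Set.Ioo (0:ℝ) 1, deriv a x * f x - deriv f x * a x = 0 := by
    intro x hx
    have := hg0 x hx
    rw [hgdef] at this
    simpa [ne_of_gt hx.1] using this
  -- f is positive near 1
  obtain ⟨δ, hδ0, hδ1, hfpos⟩ : ∃ δ > (0:ℝ), δ < 1 ∧ ∀ r ∈ Set.Ioo (1-δ) 1, 0 < f r := by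
    have h1 : ContinuousWithinAt f (Set.Icc 0 1) 1 := hfc 1 (by norm_num)
    have hev : f ⁻¹' Set.Ioi 0 ∈ nhdsWithin 1 (Set.Icc 0 1) :=
      h1 (Ioi_mem_nhds (by rw [hf1]; exact ht))
    rw [mem_nhdsWithin] at hev
    obtain ⟨U, hUopen, hU1, hUsub⟩ := hev
    obtain ⟨ε, hε0, hball⟩ := Metric.isOpen_iff.mp hUopen 1 hU1
    have hm1 := min_le_left (ε/2) (1/2)
    have hm2 := min_le_right (ε/2) (1/2)
    refine ⟨min (ε/2) (1/2), by positivity, by linarith, ?_⟩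
    intro r hr
    have hr1 := hr.1
    have hr2 := hr.2
    have hrIcc : r ∈ Set.Icc (0:ℝ) 1 := ⟨by linarith, hr.2.le⟩
    have hrU : r ∈ U := hball (by
      rw [Metric.mem_ball, Real.dist_eq, abs_lt]
      constructor <;> linarith)
    exact hUsub ⟨hrU, hrIcc⟩
  have hsubδ : Set.Ioo (1-δ) 1 ⊆ Set.Ioo (0:ℝ) 1 := fun r hr => ⟨by linarith [hr.1], hr.2⟩
  have hsubδIcc : Set.Ioo (1-δ) 1 ⊆ Set.Icc (0:ℝ) 1 := fun r hr => ⟨by linarith [hr.1], hr.2.le⟩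
  -- a vanishes on Ioo (1-δ) 1
  have haz : ∀ x ∈ Set.Ioo (1-δ) 1, a x = 0 := by
    set q : ℝ → ℝ := fun r => a r / f r with hqdef
    have hqd : ∀ x ∈ Set.Ioo (1-δ) 1, HasDerivAt q 0 x := by
      intro x hx
      have hfx : f x ≠ 0 := ne_of_gt (hfpos x hx)
      have H := (hda x (hsubδ hx)).div (hdf x (hsubδ hx)) hfx
      refine H.congr_deriv ?_
      symm
      have h2 := hw0 x (hsubδ hx)
      rw [eq_div_iff (by positivity : f x ^ 2 ≠ 0)]
      nlinarith [h2]
    have hqconst := const_on_Ioo hqd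
    have hδlt : 1 - δ < 1 := by linarith
    have hne : (nhdsWithin 1 (Set.Ioo (1-δ) 1)).NeBot := right_nhdsWithin_Ioo_neBot hδlt
    have hq1 : Filter.Tendsto q (nhdsWithin 1 (Set.Ioo (1-δ) 1)) (nhds 0) := by
      have hca : ContinuousWithinAt a (Set.Ioo (1-δ) 1) 1 :=
        (hac 1 (by norm_num)).mono hsubδIcc
      have hcf : ContinuousWithinAt f (Set.Ioo (1-δ) 1) 1 :=
        (hfc 1 (by norm_num)).mono hsubδIcc
      have hq := hca.div hcf (by rw [hf1]; exact ne_of_gt ht)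
      have h0 : a 1 / f 1 = 0 := by rw [ha1]; simp
      unfold ContinuousWithinAt at hq
      simp only [Pi.div_apply] at hq
      rw [h0] at hq
      exact hq
    intro x hx
    have hconst : ∀ᶠ r in nhdsWithin 1 (Set.Ioo (1-δ) 1), q r = q x := by
      filter_upwards [self_mem_nhdsWithin] with r hr
      exact hqconst r hr x hx
    have htc : Filter.Tendsto q (nhdsWithin 1 (Set.Ioo (1-δ) 1)) (nhds (q x)) := by
      rw [Filter.tendsto_congr' hconst]
      exact tendsto_const_nhds
    have hqx0 : q x = 0 := tendsto_nhds_unique htc hq1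
    have hfx : f x ≠ 0 := ne_of_gt (hfpos x hx)
    rcases div_eq_zero_iff.mp hqx0 with h | h
    · exact h
    · exact absurd h hfx
  -- derivative of a at 1 is zero
  have hda1 : deriv a 1 = 0 := by
    by_cases hd : DifferentiableAt ℝ a 1
    · have h1 : HasDerivWithinAt a (deriv a 1) (Set.Ioc (1-δ) 1) 1 :=
        hd.hasDerivAt.hasDerivWithinAt
      have h2 : HasDerivWithinAt a 0 (Set.Ioc (1-δ) 1) 1 := by
        have hzero : HasDerivWithinAt (fun _ : ℝ => (0:ℝ)) 0 (Set.Ioc (1-δ) 1) 1 :=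
          hasDerivWithinAt_const _ _ 0
        refine hzero.congr ?_ (by rw [ha1])
        intro z hz
        rcases eq_or_lt_of_le hz.2 with rfl | hz2
        · exact ha1
        · exact haz z ⟨hz.1, hz2⟩
      have hu : UniqueDiffWithinAt ℝ (Set.Ioc (1-δ) 1) 1 :=
        uniqueDiffOn_Ioc (1-δ) 1 1 (Set.mem_Ioc.mpr ⟨by linarith, le_refl 1⟩)
      rw [← h1.derivWithin hu]
      exact h2.derivWithin hu
    · exact deriv_zero_of_not_differentiableAt hd
  refine ⟨hda1, ?_⟩
  -- a point β near 1 where a and deriv a both vanish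
  set β := 1 - δ/2 with hβdef
  have hβmem : β ∈ Set.Ioo (1-δ) 1 := by
    constructor <;> (rw [hβdef]; linarith)
  have haβ : a β = 0 := haz β hβmem
  have hdaβ : deriv a β = 0 := by
    have hev : a =ᶠ[nhds β] fun _ => 0 :=
      Filter.eventuallyEq_of_mem (isOpen_Ioo.mem_nhds hβmem) haz
    rw [hev.deriv_eq]
    exact deriv_const _ _
  intro x hx
  rcases lt_or_ge (1-δ) x with hxδ | hxδ
  · rcases eq_or_lt_of_le hx.2 with h1 | h1
    · rw [h1]; exact ha1
    · exact haz x ⟨hxδ, h1⟩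
  · -- energy argument on [x, β]
    have hx0 : 0 < x := hx.1
    have hxβ : x < β := by rw [hβdef]; linarith
    have hβ1 : β < 1 := hβmem.2
    have hIccIoo : Set.Icc x β ⊆ Set.Ioo (0:ℝ) 1 := fun z hz =>
      ⟨lt_of_lt_of_le hx0 hz.1, lt_of_le_of_lt hz.2 hβ1⟩
    have hIccIoc : Set.Icc x β ⊆ Set.Ioc (0:ℝ) 1 := fun z hz => hIooIoc (hIccIoo hz)
    obtain ⟨M, hM⟩ := isCompact_Icc.exists_bound_of_continuousOn (hW.mono hIccIoc)
    set M' := max M 0 with hM'def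
    have hM'b : ∀ z ∈ Set.Icc x β, |W z| ≤ M' := fun z hz => by
      have := hM z hz
      rw [Real.norm_eq_abs] at this
      exact this.trans (le_max_left _ _)
    set K := 2 + 2/x^2 + 2*M' + 2/x with hKdef
    set E := fun r => (a r)^2 + (deriv a r)^2 with hEdef
    set φ := fun r => E r * Real.exp (K*r) with hφdef
    have hEd : ∀ r ∈ Set.Ioo x β,
        HasDerivAt E (2*a r*deriv a r + 2*deriv a r*(deriv (deriv a) r)) r := by
      intro r hr
      have hrIoo : r ∈ Set.Ioo (0:ℝ) 1 := hIccIoo ⟨hr.1.le, hr.2.le⟩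
      have h1 := ((hda r hrIoo).pow 2).add ((hda' r hrIoo).pow 2)
      refine h1.congr_deriv ?_
      push_cast
      ring
    have hφd : ∀ r ∈ Set.Ioo x β,
        HasDerivAt φ ((2*a r*deriv a r + 2*deriv a r*(deriv (deriv a) r) + K * E r)
          * Real.exp (K*r)) r := by
      intro r hr
      have hexp : HasDerivAt (fun y => Real.exp (K*y)) (Real.exp (K*r) * K) r := by
        simpa using ((hasDerivAt_id r).const_mul K).exp
      have h3 := (hEd r hr).mul hexp
      refine h3.congr_deriv ?_
      rw [hEdef]
      ring
    have hφmono : MonotoneOn φ (Set.Icc x β) := by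
      apply monotoneOn_of_deriv_nonneg (convex_Icc x β)
      · -- continuity of φ on Icc x β
        rw [hφdef, hEdef]
        refine ContinuousOn.mul ?_ ?_
        · exact ((hac.mono (hIccIoo.trans hIooIcc)).pow 2).add ((hcda.mono hIccIoo).pow 2)
        · exact (Real.continuous_exp.comp (continuous_const.mul continuous_id)).continuousOn
      · rw [interior_Icc]
        intro r hr
        exact (hφd r hr).differentiableAt.differentiableWithinAt
      · rw [interior_Icc]
        intro r hr
        rw [(hφd r hr).deriv]
        have hrIoo : r ∈ Set.Ioo (0:ℝ) 1 := hIccIoo ⟨hr.1.le, hr.2.le⟩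
        refine mul_nonneg ?_ (Real.exp_pos _).le
        rw [ha'' r hrIoo]
        have hb := energy_bound (a r) (deriv a r) (W r) r x M' hx0 hr.1.le
          (hM'b r ⟨hr.1.le, hr.2.le⟩)
        rw [hKdef, hEdef]
        beta_reduce
        rw [neg_div] at hb
        exact hb
    have h1 : φ x ≤ φ β :=
      hφmono (Set.left_mem_Icc.mpr hxβ.le) (Set.right_mem_Icc.mpr hxβ.le) hxβ.le
    have hφβ : φ β = 0 := by
      rw [hφdef, hEdef]
      simp [haβ, hdaβ]
    have hφx : 0 ≤ φ x := by
      rw [hφdef, hEdef]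
      positivity
    have hφx0 : φ x = 0 := le_antisymm (le_of_le_of_eq h1 hφβ) hφx
    have hEx : E x = 0 := by
      have h3 : E x * Real.exp (K * x) = 0 := hφx0
      rcases mul_eq_zero.mp h3 with h2 | h2
      · exact h2
      · exact absurd h2 (Real.exp_ne_zero _)
    rw [hEdef] at hEx
    beta_reduce at hEx
    have h2 : a x ^ 2 = 0 := by
      linarith [hEx, sq_nonneg (a x), sq_nonneg (deriv a x)]
    exact pow_eq_zero_iff (by norm_num : (2:ℕ) ≠ 0) |>.mp h2
end

section
/- Let A₊, A₋ > 0, B² < A₊A₋, t₊, t₋ > 0, λ_s the smallest eigenvalue of [[A₊,B],[B,A₋]], and M = max{A₊t₊² + Bt₋², A₋t₋² + Bt₊²}. Suppose Ψ = (ψ₊, ψ₋) : Ω̄ → ℂ² is a C² solution of −Δψ_± = −[A_±(|ψ_±|² − t_±²) + B(|ψ_∓|² − t_∓²)]ψ_± in a bounded domain Ω with |ψ₊|² + |ψ₋|² ≤ t₊² + t₋² on ∂Ω. If the function v = |ψ₊|² + |ψ₋|² attains an interior maximum at x₀ with v(x₀) > 2M/λ_s, then Δv(x₀) > 0, contradicting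 the maximum; hence |Ψ(x)|² ≤ max{2M/λ_s, t₊² + t₋²} in Ω. -/
open Filter Topology Set

/-- Second derivative test: at an interior local max the second derivative is nonpositive. -/
lemma snd_deriv_nonpos_of_isLocalMax {g g1 : ℝ → ℝ} {c : ℝ}
    (hg : ∀ᶠ t in 𝓝 (0:ℝ), HasDerivAt g (g1 t) t)
    (hg1 : HasDerivAt g1 c 0)
    (hmax : IsLocalMax g 0) : c ≤ 0 := by
  by_contra hc
  push_neg at hc
  have h0 : g1 0 = 0 := hmax.hasDerivAt_eq_zero hg.self_of_nhds
  have htend : Tendsto (slope g1 0) (𝓝[≠] (0:ℝ)) (𝓝 c) :=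
    hasDerivAt_iff_tendsto_slope.mp hg1
  have hslope : ∀ᶠ t in 𝓝[≠] (0:ℝ), 0 < slope g1 0 t :=
    htend.eventually (eventually_gt_nhds hc)
  have hslope' : ∀ᶠ t in 𝓝 (0:ℝ), t ≠ 0 → 0 < slope g1 0 t := by
    rw [eventually_nhdsWithin_iff] at hslope
    filter_upwards [hslope] with t ht hne
    exact ht (by simpa using hne)
  have hall : ∀ᶠ t in 𝓝 (0:ℝ),
      (HasDerivAt g (g1 t) t ∧ g t ≤ g 0) ∧ (t ≠ 0 → 0 < slope g1 0 t) := by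
    filter_upwards [hg, hmax, hslope'] with t h1 h2 h3 using ⟨⟨h1, h2⟩, h3⟩
  rw [Metric.eventually_nhds_iff] at hall
  obtain ⟨δ, hδ, hP⟩ := hall
  have hmem : ∀ t ∈ Icc (0:ℝ) (δ/2),
      (HasDerivAt g (g1 t) t ∧ g t ≤ g 0) ∧ (t ≠ 0 → 0 < slope g1 0 t) := by
    intro t ht
    apply hP
    rw [Real.dist_eq, sub_zero, abs_of_nonneg ht.1]
    linarith [ht.2]
  have hmono : StrictMonoOn g (Icc 0 (δ/2)) := by
    apply strictMonoOn_of_deriv_pos (convex_Icc 0 (δ/2))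
    · intro t ht
      exact ((hmem t ht).1.1).continuousAt.continuousWithinAt
    · intro t ht
      rw [interior_Icc] at ht
      have hts := (hmem t ⟨ht.1.le, ht.2.le⟩)
      rw [hts.1.1.deriv]
      have hpos := hts.2 (ne_of_gt ht.1)
      rw [slope_def_field] at hpos
      rcases div_pos_iff.1 (by simpa [h0] using hpos) with ⟨h, _⟩ | ⟨_, h⟩
      · exact h
      · linarith [ht.1]
  have h1 : g 0 < g (δ/2) :=
    hmono ⟨le_refl 0, by linarith⟩ ⟨by linarith, le_refl _⟩ (by linarith)
  have h2 : g (δ/2) ≤ g 0 := (hmem (δ/2) ⟨by linarith, le_refl _⟩).1.2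
  linarith

/-- Derivatives of `ψ` and of its directional derivative along the line `t ↦ x₀ + t • u`. -/
lemma hasDerivAt_along_line {ψ : EuclideanSpace ℝ (Fin 2) → ℂ}
    {x₀ u : EuclideanSpace ℝ (Fin 2)} {t₀ : ℝ}
    (h : ContDiffAt ℝ 2 ψ (x₀ + t₀ • u)) :
    HasDerivAt (fun t : ℝ => ψ (x₀ + t • u)) (fderiv ℝ ψ (x₀ + t₀ • u) u) t₀ ∧
    HasDerivAt (fun t : ℝ => fderiv ℝ ψ (x₀ + t • u) u)
      (fderiv ℝ (fun y => fderiv ℝ ψ y u) (x₀ + t₀ • u) u) t₀ := by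
  have hline : HasDerivAt (fun t : ℝ => x₀ + t • u) u t₀ := by
    simpa using ((hasDerivAt_id t₀).smul_const u).const_add x₀
  have hψd : DifferentiableAt ℝ ψ (x₀ + t₀ • u) := h.differentiableAt (by norm_num)
  constructor
  · exact hψd.hasFDerivAt.comp_hasDerivAt t₀ hline
  · have hF : ContDiffAt ℝ 1 (fderiv ℝ ψ) (x₀ + t₀ • u) := h.fderiv_right (by norm_num)
    have hFd : DifferentiableAt ℝ (fun y => fderiv ℝ ψ y u) (x₀ + t₀ • u) :=
      ((ContinuousLinearMap.apply ℝ ℂ u).differentiable.differentiableAt).comp _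
        (hF.differentiableAt (by norm_num))
    exact hFd.hasFDerivAt.comp_hasDerivAt t₀ hline

/-- Derivative of `‖γ‖²` for a complex-valued curve. -/
lemma hasDerivAt_norm_sq_curve {γ : ℝ → ℂ} {d : ℂ} {t : ℝ} (h : HasDerivAt γ d t) :
    HasDerivAt (fun s => ‖γ s‖ ^ 2) (2 * ((starRingEnd ℂ) (γ t) * d).re) t := by
  have h1 := h.star.mul h
  have h2 := Complex.reCLM.hasFDerivAt.comp_hasDerivAt t h1
  have hfun : (fun s => (Complex.reCLM) ((starRingEnd ℂ) (γ s) * γ s)) =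
      fun s => ‖γ s‖ ^ 2 := by
    funext s
    simp [Complex.reCLM_apply, Complex.mul_re, Complex.conj_re, Complex.conj_im,
      Complex.sq_norm, Complex.normSq_apply]
  have hval : (Complex.reCLM) ((starRingEnd ℂ) d * γ t + (starRingEnd ℂ) (γ t) * d)
      = 2 * ((starRingEnd ℂ) (γ t) * d).re := by
    simp [Complex.reCLM_apply, Complex.add_re, Complex.mul_re, Complex.conj_re,
      Complex.conj_im]
    ring
  rw [← hfun, ← hval]
  exact h2

/-- Derivative of `2 Re(conj γ ⬝ γ')`. -/
lemma hasDerivAt_re_conj_mul {γ γ' : ℝ → ℂ} {d d' : ℂ} {t : ℝ}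
    (h : HasDerivAt γ d t) (h' : HasDerivAt γ' d' t) :
    HasDerivAt (fun s => 2 * ((starRingEnd ℂ) (γ s) * γ' s).re)
      (2 * (((starRingEnd ℂ) d * γ' t).re + ((starRingEnd ℂ) (γ t) * d').re)) t := by
  have h1 := h.star.mul h'
  have h2 := Complex.reCLM.hasFDerivAt.comp_hasDerivAt t h1
  have h3 := h2.const_mul (2:ℝ)
  convert h3 using 1
  · rfl
  · rfl
  · simp [Complex.reCLM_apply]
  · simp [Complex.reCLM_apply]

lemma lamS_facts (Ap Am B lamS : ℝ) (hAp : 0 < Ap) (hAm : 0 < Am)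
    (hB : B ^ 2 < Ap * Am)
    (hlamS : lamS = ((Ap + Am) - Real.sqrt ((Ap - Am) ^ 2 + 4 * B ^ 2)) / 2) :
    0 < lamS ∧ 0 ≤ Ap - lamS ∧ 0 ≤ Am - lamS ∧ (Ap - lamS) * (Am - lamS) = B ^ 2 := by
  set D := (Ap - Am) ^ 2 + 4 * B ^ 2 with hD
  have hD0 : 0 ≤ D := by positivity
  have hs2 : Real.sqrt D ^ 2 = D := Real.sq_sqrt hD0
  have hs0 : 0 ≤ Real.sqrt D := Real.sqrt_nonneg D
  have habs : |Ap - Am| ≤ Real.sqrt D := by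
    rw [← Real.sqrt_sq_eq_abs]
    exact Real.sqrt_le_sqrt (by nlinarith)
  have hub : Real.sqrt D < Ap + Am := by
    rw [show Ap + Am = Real.sqrt ((Ap+Am)^2) from (Real.sqrt_sq (by linarith)).symm]
    exact Real.sqrt_lt_sqrt hD0 (by nlinarith)
  have h1 : 0 < lamS := by rw [hlamS]; linarith
  have h2 : 0 ≤ Ap - lamS := by
    have := neg_abs_le (Ap - Am)
    rw [hlamS]; linarith
  have h3 : 0 ≤ Am - lamS := by
    have := le_abs_self (Ap - Am)
    rw [hlamS]; linarith
  refine ⟨h1, h2, h3, ?_⟩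
  have h4 : Real.sqrt D = (Ap + Am) - 2 * lamS := by rw [hlamS]; ring
  have h5 : ((Ap + Am) - 2 * lamS) ^ 2 = D := by rw [← h4]; exact hs2
  rw [hD] at h5
  linear_combination h5 / 4

set_option maxHeartbeats 1000000 in
lemma key_algebra (Ap Am B tp tm lamS M a b : ℝ) (hAp : 0 < Ap) (hAm : 0 < Am)
    (hB : B ^ 2 < Ap * Am) (htp : 0 < tp) (htm : 0 < tm)
    (hlamS : lamS = ((Ap + Am) - Real.sqrt ((Ap - Am) ^ 2 + 4 * B ^ 2)) / 2)
    (hM : M = max (Ap * tp ^ 2 + B * tm ^ 2) (Am * tm ^ 2 + B * tp ^ 2))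
    (ha : 0 ≤ a) (hb : 0 ≤ b) (hv : 2 * M / lamS < a + b) :
    0 < (Ap * (a - tp ^ 2) + B * (b - tm ^ 2)) * a
      + (Am * (b - tm ^ 2) + B * (a - tp ^ 2)) * b := by
  obtain ⟨hl, hp, hq, hdet⟩ := lamS_facts Ap Am B lamS hAp hAm hB hlamS
  have hM1 : Ap * tp ^ 2 + B * tm ^ 2 ≤ M := hM ▸ le_max_left _ _
  have hM2 : Am * tm ^ 2 + B * tp ^ 2 ≤ M := hM ▸ le_max_right _ _
  have hM0 : 0 < M := by
    by_contra h
    push_neg at h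
    have e1 : Ap * tp ^ 2 ≤ (-B) * tm ^ 2 := by linarith
    have e2 : Am * tm ^ 2 ≤ (-B) * tp ^ 2 := by linarith
    have e3 : 0 < Ap * tp ^ 2 := by positivity
    have e4 : 0 < Am * tm ^ 2 := by positivity
    have e5 := mul_le_mul e1 e2 e4.le (le_trans e3.le e1)
    nlinarith [e5, mul_pos (pow_pos htp 2) (pow_pos htm 2)]
  have hvl : 2 * M < lamS * (a + b) := by
    have := (div_lt_iff₀ hl).mp hv
    linarith
  have hv0 : 0 < a + b := by nlinarith
  have key : 0 ≤ (Ap - lamS) * a ^ 2 + 2 * B * a * b + (Am - lamS) * b ^ 2 := by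
    rcases eq_or_lt_of_le hp with h0 | h0
    · have hB2 : B ^ 2 = 0 := by nlinarith [hdet]
      have hB0 : B = 0 := (pow_eq_zero_iff two_ne_zero).mp hB2
      have hApl : Ap = lamS := by linarith
      rw [hApl, hB0]
      nlinarith [mul_nonneg hq (sq_nonneg b)]
    · have hdb : (Ap - lamS) * (Am - lamS) * b ^ 2 = B ^ 2 * b ^ 2 := by rw [hdet]
      nlinarith [sq_nonneg ((Ap - lamS) * a + B * b), hdb, h0]
  have hquad : lamS * (a ^ 2 + b ^ 2) ≤ Ap * a ^ 2 + 2 * B * a * b + Am * b ^ 2 := by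
    linarith [key]
  have hpos : 0 < lamS * (a + b) - 2 * M := by linarith
  nlinarith [hquad, mul_le_mul_of_nonneg_right hM1 ha, mul_le_mul_of_nonneg_right hM2 hb,
    mul_nonneg hl.le (sq_nonneg (a - b)), mul_pos hv0 hpos]

lemma re_conj_mul_self_nonneg (d : ℂ) : 0 ≤ ((starRingEnd ℂ) d * d).re := by
  simp [Complex.mul_re, Complex.conj_re, Complex.conj_im]
  nlinarith [sq_nonneg d.re, sq_nonneg d.im]

lemma re_conj_mul_real_mul (r : ℝ) (z : ℂ) :
    ((starRingEnd ℂ) z * ((r:ℂ) * z)).re = r * ‖z‖ ^ 2 := by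
  simp [Complex.mul_re, Complex.mul_im, Complex.conj_re, Complex.conj_im,
    Complex.sq_norm, Complex.normSq_apply]
  ring

/-- The Laplacian of a `ℂ`-valued function on `ℝ²`, as the sum of second
partial derivatives in the coordinate directions. -/
noncomputable def lap2 (ψ : EuclideanSpace ℝ (Fin 2) → ℂ)
    (x : EuclideanSpace ℝ (Fin 2)) : ℂ :=
  ∑ i : Fin 2,
    fderiv ℝ (fun y => fderiv ℝ ψ y (EuclideanSpace.basisFun (Fin 2) ℝ i)) x
      (EuclideanSpace.basisFun (Fin 2) ℝ i)

theorem a_priori_bound (Ap Am B tp tm lamS M : ℝ)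
    (hAp : 0 < Ap) (hAm : 0 < Am) (hB : B ^ 2 < Ap * Am)
    (htp : 0 < tp) (htm : 0 < tm)
    (hlamS : lamS = ((Ap + Am) - Real.sqrt ((Ap - Am) ^ 2 + 4 * B ^ 2)) / 2)
    (hM : M = max (Ap * tp ^ 2 + B * tm ^ 2) (Am * tm ^ 2 + B * tp ^ 2))
    (Ω : Set (EuclideanSpace ℝ (Fin 2))) (hΩopen : IsOpen Ω)
    (hΩbdd : Bornology.IsBounded Ω)
    (ψp ψm : EuclideanSpace ℝ (Fin 2) → ℂ)
    (hψp : ContDiffOn ℝ 2 ψp (closure Ω)) (hψm : ContDiffOn ℝ 2 ψm (closure Ω))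
    (heqp : ∀ x ∈ Ω, -(lap2 ψp x) =
      -(((Ap * (‖ψp x‖ ^ 2 - tp ^ 2) + B * (‖ψm x‖ ^ 2 - tm ^ 2)) : ℝ) : ℂ) * ψp x)
    (heqm : ∀ x ∈ Ω, -(lap2 ψm x) =
      -(((Am * (‖ψm x‖ ^ 2 - tm ^ 2) + B * (‖ψp x‖ ^ 2 - tp ^ 2)) : ℝ) : ℂ) * ψm x)
    (hbdry : ∀ x ∈ frontier Ω, ‖ψp x‖ ^ 2 + ‖ψm x‖ ^ 2 ≤ tp ^ 2 + tm ^ 2) :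
    (∀ x₀ ∈ Ω,
      IsMaxOn (fun x => ‖ψp x‖ ^ 2 + ‖ψm x‖ ^ 2) (closure Ω) x₀ →
      2 * M / lamS < ‖ψp x₀‖ ^ 2 + ‖ψm x₀‖ ^ 2 → False) ∧
    ∀ x ∈ Ω, ‖ψp x‖ ^ 2 + ‖ψm x‖ ^ 2 ≤ max (2 * M / lamS) (tp ^ 2 + tm ^ 2) := by
  have hpart1 : ∀ x₀ ∈ Ω,
      IsMaxOn (fun x => ‖ψp x‖ ^ 2 + ‖ψm x‖ ^ 2) (closure Ω) x₀ →
      2 * M / lamS < ‖ψp x₀‖ ^ 2 + ‖ψm x₀‖ ^ 2 → False := by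
    intro x₀ hx₀ hmax hvgt
    have hcd : ∀ ψ : EuclideanSpace ℝ (Fin 2) → ℂ, ContDiffOn ℝ 2 ψ (closure Ω) →
        ∀ x ∈ Ω, ContDiffAt ℝ 2 ψ x := fun ψ hψ x hx =>
      hψ.contDiffAt (mem_of_superset (hΩopen.mem_nhds hx) subset_closure)
    set u : Fin 2 → EuclideanSpace ℝ (Fin 2) :=
      fun i => EuclideanSpace.basisFun (Fin 2) ℝ i with hu
    have hev : ∀ i : Fin 2, ∀ᶠ t in 𝓝 (0:ℝ), x₀ + t • u i ∈ Ω := by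
      intro i
      have hcont : Continuous fun t : ℝ => x₀ + t • u i := by continuity
      have h0 : (fun t : ℝ => x₀ + t • u i) 0 ∈ Ω := by simpa using hx₀
      exact hcont.continuousAt.preimage_mem_nhds (hΩopen.mem_nhds h0)
    have ht0 : ∀ i : Fin 2, x₀ + (0:ℝ) • u i ∈ Ω := fun i => by simpa using hx₀
    have hci : ∀ i : Fin 2,
        2 * (((starRingEnd ℂ) (fderiv ℝ ψp x₀ (u i)) * fderiv ℝ ψp x₀ (u i)).re
          + ((starRingEnd ℂ) (ψp x₀) * fderiv ℝ (fun y => fderiv ℝ ψp y (u i)) x₀ (u i)).re)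
        + 2 * (((starRingEnd ℂ) (fderiv ℝ ψm x₀ (u i)) * fderiv ℝ ψm x₀ (u i)).re
          + ((starRingEnd ℂ) (ψm x₀) * fderiv ℝ (fun y => fderiv ℝ ψm y (u i)) x₀ (u i)).re)
          ≤ 0 := by
      intro i
      have hgd : ∀ᶠ t in 𝓝 (0:ℝ), HasDerivAt
          (fun s => ‖ψp (x₀ + s • u i)‖ ^ 2 + ‖ψm (x₀ + s • u i)‖ ^ 2)
          (2 * ((starRingEnd ℂ) (ψp (x₀ + t • u i)) * fderiv ℝ ψp (x₀ + t • u i) (u i)).re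
           + 2 * ((starRingEnd ℂ) (ψm (x₀ + t • u i)) * fderiv ℝ ψm (x₀ + t • u i) (u i)).re)
          t := by
        filter_upwards [hev i] with t ht
        have hp2 := hasDerivAt_along_line (hcd ψp hψp _ ht)
        have hm2 := hasDerivAt_along_line (hcd ψm hψm _ ht)
        exact (hasDerivAt_norm_sq_curve hp2.1).add (hasDerivAt_norm_sq_curve hm2.1)
      have hp2 := hasDerivAt_along_line (hcd ψp hψp _ (ht0 i))
      have hm2 := hasDerivAt_along_line (hcd ψm hψm _ (ht0 i))
      simp only [zero_smul, add_zero] at hp2 hm2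
      have hg1d : HasDerivAt
          (fun t : ℝ => 2 * ((starRingEnd ℂ) (ψp (x₀ + t • u i)) * fderiv ℝ ψp (x₀ + t • u i) (u i)).re
           + 2 * ((starRingEnd ℂ) (ψm (x₀ + t • u i)) * fderiv ℝ ψm (x₀ + t • u i) (u i)).re)
          (2 * (((starRingEnd ℂ) (fderiv ℝ ψp x₀ (u i)) * fderiv ℝ ψp x₀ (u i)).re
            + ((starRingEnd ℂ) (ψp x₀) * fderiv ℝ (fun y => fderiv ℝ ψp y (u i)) x₀ (u i)).re)
           + 2 * (((starRingEnd ℂ) (fderiv ℝ ψm x₀ (u i)) * fderiv ℝ ψm x₀ (u i)).re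
            + ((starRingEnd ℂ) (ψm x₀) * fderiv ℝ (fun y => fderiv ℝ ψm y (u i)) x₀ (u i)).re))
          (0:ℝ) := by
        have h1 := hasDerivAt_re_conj_mul hp2.1 hp2.2
        have h2 := hasDerivAt_re_conj_mul hm2.1 hm2.2
        have h3 := h1.add h2
        simp only [zero_smul, add_zero] at h3
        exact h3
      have hlm : IsLocalMax
          (fun s : ℝ => ‖ψp (x₀ + s • u i)‖ ^ 2 + ‖ψm (x₀ + s • u i)‖ ^ 2) (0:ℝ) := by
        filter_upwards [hev i] with t ht
        have := hmax (subset_closure ht)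
        simpa using this
      exact snd_deriv_nonpos_of_isLocalMax hgd hg1d hlm
    -- sum the directional second derivative bounds
    have hlapp : lap2 ψp x₀ = fderiv ℝ (fun y => fderiv ℝ ψp y (u 0)) x₀ (u 0)
        + fderiv ℝ (fun y => fderiv ℝ ψp y (u 1)) x₀ (u 1) := by
      rw [lap2, Fin.sum_univ_two]
    have hlapm : lap2 ψm x₀ = fderiv ℝ (fun y => fderiv ℝ ψm y (u 0)) x₀ (u 0)
        + fderiv ℝ (fun y => fderiv ℝ ψm y (u 1)) x₀ (u 1) := by
      rw [lap2, Fin.sum_univ_two]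
    have hsum : ((starRingEnd ℂ) (ψp x₀) * lap2 ψp x₀).re
        + ((starRingEnd ℂ) (ψm x₀) * lap2 ψm x₀).re ≤ 0 := by
      have h0 := hci 0
      have h1 := hci 1
      have n1 := re_conj_mul_self_nonneg (fderiv ℝ ψp x₀ (u 0))
      have n2 := re_conj_mul_self_nonneg (fderiv ℝ ψm x₀ (u 0))
      have n3 := re_conj_mul_self_nonneg (fderiv ℝ ψp x₀ (u 1))
      have n4 := re_conj_mul_self_nonneg (fderiv ℝ ψm x₀ (u 1))
      rw [hlapp, hlapm, mul_add, mul_add, Complex.add_re, Complex.add_re]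
      linarith
    -- use the PDE
    have hpde_p : lap2 ψp x₀ =
        (((Ap * (‖ψp x₀‖ ^ 2 - tp ^ 2) + B * (‖ψm x₀‖ ^ 2 - tm ^ 2)) : ℝ) : ℂ) * ψp x₀ := by
      have := heqp x₀ hx₀
      rw [neg_mul] at this
      exact neg_inj.mp this
    have hpde_m : lap2 ψm x₀ =
        (((Am * (‖ψm x₀‖ ^ 2 - tm ^ 2) + B * (‖ψp x₀‖ ^ 2 - tp ^ 2)) : ℝ) : ℂ) * ψm x₀ := by
      have := heqm x₀ hx₀
      rw [neg_mul] at this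
      exact neg_inj.mp this
    rw [hpde_p, hpde_m, re_conj_mul_real_mul, re_conj_mul_real_mul] at hsum
    have hkey := key_algebra Ap Am B tp tm lamS M (‖ψp x₀‖ ^ 2) (‖ψm x₀‖ ^ 2)
      hAp hAm hB htp htm hlamS hM (by positivity) (by positivity) hvgt
    linarith
  refine ⟨hpart1, ?_⟩
  intro x hx
  have hcpt : IsCompact (closure Ω) :=
    Metric.isCompact_of_isClosed_isBounded isClosed_closure hΩbdd.closure
  have hvc : ContinuousOn (fun x => ‖ψp x‖ ^ 2 + ‖ψm x‖ ^ 2) (closure Ω) :=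
    ((hψp.continuousOn.norm).pow 2).add ((hψm.continuousOn.norm).pow 2)
  obtain ⟨x₀, hx₀c, hmax⟩ := hcpt.exists_isMaxOn ⟨x, subset_closure hx⟩ hvc
  by_cases hin : x₀ ∈ Ω
  · have hle : ‖ψp x₀‖ ^ 2 + ‖ψm x₀‖ ^ 2 ≤ 2 * M / lamS :=
      not_lt.1 fun hlt => hpart1 x₀ hin hmax hlt
    exact le_trans (hmax (subset_closure hx)) (le_trans hle (le_max_left _ _))
  · have hfr : x₀ ∈ frontier Ω := by
      rw [frontier, hΩopen.interior_eq]
      exact ⟨hx₀c, hin⟩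
    exact le_trans (hmax (subset_closure hx)) (le_trans (hbdry x₀ hfr) (le_max_right _ _))
end
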